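/- arXiv:0906.1241 — 8 statements merged into one kernel-verified Lean document; each statement's English description precedes it below -/
import Mathlib

section
/- If A is a set of nonnegative integers whose h-fold sumset equals all of the nonnegative integers (h ≥ 1), then for every nonnegative integer x, x + 1 ≤ C(A(x) + h, h), where A(x) is the number of elements a of A with 1 ≤ a ≤ x. -/
theorem stmt0 (A : Set ℕ) [DecidablePred (· ∈ A)] (h : ℕ) (hh : 1 ≤ h)
    (hbasis : ∀ n : ℕ, ∃ f : Fin h → ℕ, (∀ i, f i ∈ A) ∧ ∑ i, f i = n) :
    ∀ x : ℕ, x + 1 ≤ Nat.choose (((Finset.Icc 1 x).filter (· ∈ A)).card + h) h := by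
  intro x
  classical
  set S : Finset ℕ := insert 0 ((Finset.Icc 1 x).filter (· ∈ A)) with hS
  -- build an injective map Fin (x+1) → Sym ↥S h
  have key : ∀ n : Fin (x + 1), ∃ s : Sym {a // a ∈ S} h,
      ((s : Multiset {a // a ∈ S}).map Subtype.val).sum = (n : ℕ) := by
    intro n
    obtain ⟨f, hfA, hfsum⟩ := hbasis n
    have hmem : ∀ i, f i ∈ S := by
      intro i
      rcases Nat.eq_zero_or_pos (f i) with h0 | hpos
      · simp [hS, h0]
      · have hle : f i ≤ (n : ℕ) := by
          rw [← hfsum]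
          exact Finset.single_le_sum (fun j _ => Nat.zero_le _) (Finset.mem_univ i)
        have : f i ≤ x := le_trans hle (Nat.lt_succ_iff.mp n.isLt)
        simp only [hS, Finset.mem_insert, Finset.mem_filter, Finset.mem_Icc]
        exact Or.inr ⟨⟨hpos, this⟩, hfA i⟩
    refine ⟨⟨(List.ofFn (fun i => (⟨f i, hmem i⟩ : {a // a ∈ S})) : Multiset _), by simp⟩, ?_⟩
    simp only [Sym.coe_mk, ← Multiset.map_coe, List.map_ofFn]
    simp [Function.comp, List.sum_ofFn, hfsum]
  choose g hg using key
  have ginj : Function.Injective g := by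
    intro a b hab
    have : (((g a).toMultiset).map Subtype.val).sum = (((g b).toMultiset).map Subtype.val).sum := by
      rw [hab]
    rw [hg a, hg b] at this
    exact Fin.ext this
  have hcard : x + 1 ≤ Fintype.card (Sym {a // a ∈ S} h) := by
    simpa using Fintype.card_le_of_injective g ginj
  have hsym : Fintype.card (Sym {a // a ∈ S} h) = (Fintype.card {a // a ∈ S} + h - 1).choose h :=
    Sym.card_sym_eq_choose h
  have hScard : Fintype.card {a // a ∈ S} ≤ ((Finset.Icc 1 x).filter (· ∈ A)).card + 1 := by
    rw [Fintype.card_coe]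
    simpa [hS] using Finset.card_insert_le 0 ((Finset.Icc 1 x).filter (· ∈ A))
  calc x + 1 ≤ (Fintype.card {a // a ∈ S} + h - 1).choose h := by rw [← hsym]; exact hcard
    _ ≤ (((Finset.Icc 1 x).filter (· ∈ A)).card + h).choose h := by
        apply Nat.choose_le_choose
        omega
end

section
/- Under the same hypotheses (r₁ < ⋯ < r_h pairwise coprime positive integers, P such that every prime dividing any difference r_j − r_i divides P, s_{i,k} = kP + r_i, S_k = ∏_{i=1}^h s_{i,k}, a_{i,k} = S_k / s_{i,k}), for every positive integer k the integers a_{1,k}, …, a_{h,k} have greatest common divisor 1. -/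
theorem stmt4 (h : ℕ) (hh : 2 ≤ h) (r : Fin h → ℕ)
    (hrpos : ∀ i, 0 < r i) (hrmono : StrictMono r)
    (hrcop : ∀ i j, i ≠ j → Nat.Coprime (r i) (r j))
    (P : ℕ) (hP : 0 < P)
    (hPprime : ∀ i j : Fin h, i < j → ∀ p : ℕ, p.Prime → p ∣ r j - r i → p ∣ P)
    (s : Fin h → ℕ → ℕ) (hs : ∀ i k, s i k = k * P + r i)
    (S : ℕ → ℕ) (hS : ∀ k, S k = ∏ i, s i k)
    (a : Fin h → ℕ → ℕ) (ha : ∀ i k, a i k = S k / s i k) :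
    ∀ k : ℕ, 1 ≤ k → Finset.univ.gcd (fun i : Fin h => a i k) = 1 := by
  intro k hk
  have hspos : ∀ i, 0 < s i k := fun i => by
    rw [hs]; have := hrpos i; omega
  have hai : ∀ i, a i k = ∏ j ∈ Finset.univ.erase i, s j k := by
    intro i
    rw [ha, hS, ← Finset.mul_prod_erase _ _ (Finset.mem_univ i),
      Nat.mul_div_cancel_left _ (hspos i)]
  by_contra hne
  obtain ⟨p, hp, hpd⟩ := Nat.exists_prime_and_dvd hne
  have hpdvd : ∀ i, p ∣ a i k := fun i =>
    hpd.trans (Finset.gcd_dvd (Finset.mem_univ i))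
  -- from p ∣ a i, get j ≠ i with p ∣ s j k
  have hget : ∀ i, ∃ j, j ≠ i ∧ p ∣ s j k := by
    intro i
    have := hpdvd i
    rw [hai i] at this
    obtain ⟨j, hjmem, hjd⟩ := hp.prime.exists_mem_finset_dvd this
    exact ⟨j, (Finset.mem_erase.mp hjmem).1, hjd⟩
  -- key: p cannot divide two distinct s values
  have hkey : ∀ i j : Fin h, i < j → p ∣ s i k → p ∣ s j k → False := by
    intro i j hij hdi hdj
    have hr : r i < r j := hrmono hij
    have hsub : s j k - s i k = r j - r i := by rw [hs, hs]; omega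
    have hdP : p ∣ P := by
      apply hPprime i j hij p hp
      rw [← hsub]; exact Nat.dvd_sub hdj hdi
    have hdri : p ∣ r i := by
      have : p ∣ s i k - k * P := Nat.dvd_sub hdi (Dvd.dvd.mul_left hdP k)
      rwa [hs, Nat.add_sub_cancel_left] at this
    have hdrj : p ∣ r j := by
      have : p ∣ s j k - k * P := Nat.dvd_sub hdj (Dvd.dvd.mul_left hdP k)
      rwa [hs, Nat.add_sub_cancel_left] at this
    have := Nat.eq_one_of_dvd_coprimes (hrcop i j (Fin.ne_of_lt hij)) hdri hdrj
    exact hp.one_lt.ne' this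
  obtain ⟨i0, hi0ne, hi0⟩ := hget ⟨0, by omega⟩
  obtain ⟨j0, hj0ne, hj0⟩ := hget i0
  rcases lt_trichotomy i0 j0 with hlt | heq | hgt
  · exact hkey i0 j0 hlt hi0 hj0
  · exact hj0ne heq.symm
  · exact hkey j0 i0 hgt hj0 hi0
end

section
/- With s_{i,k} = kP + r_i and S_k = ∏_{i=1}^h s_{i,k} where r₁ < ⋯ < r_h are positive integers and P ≥ r_h − r₁ is a positive integer, the sequence S_k is strictly increasing in k, and moreover if k ≥ k₀ = ⌊1/(2^{1/h} − 1)⌋ + 1 then S_{k+1} < 2 S_k. -/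
theorem stmt5 (h : ℕ) (hh : 2 ≤ h) (r : Fin h → ℕ)
    (hrpos : ∀ i, 0 < r i) (hrmono : StrictMono r)
    (P : ℕ) (hP : 0 < P)
    (hPge : r ⟨h - 1, by omega⟩ - r ⟨0, by omega⟩ ≤ P)
    (S : ℕ → ℕ) (hS : ∀ k, S k = ∏ i, (k * P + r i))
    (k₀ : ℕ) (hk₀ : k₀ = ⌊1 / ((2 : ℝ) ^ ((1 : ℝ) / h) - 1)⌋₊ + 1) :
    (∀ k : ℕ, 1 ≤ k → S k < S (k + 1)) ∧
      (∀ k : ℕ, k₀ ≤ k → S (k + 1) < 2 * S k) := by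
  haveI : NeZero h := ⟨by omega⟩
  have hne : (Finset.univ : Finset (Fin h)).Nonempty := Finset.univ_nonempty
  have hcard : (Finset.univ : Finset (Fin h)).card = h := by simp
  constructor
  · intro k hk
    rw [hS, hS]
    apply Finset.prod_lt_prod_of_nonempty _ _ hne
    · intro i _
      have := hrpos i; positivity
    · intro i _
      have h1 : (k + 1) * P = k * P + P := by ring
      omega
  · intro k hk
    have hk1 : 1 ≤ k := by omega
    -- key nat inequality
    have key : k ^ h * S (k + 1) < (k + 1) ^ h * S k := by
      rw [hS, hS]
      calc k ^ h * ∏ i, ((k + 1) * P + r i)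
          = ∏ i, (k * ((k + 1) * P + r i)) := by
            rw [Finset.prod_mul_distrib, Finset.prod_const, hcard]
        _ < ∏ i, ((k + 1) * (k * P + r i)) := by
            apply Finset.prod_lt_prod_of_nonempty _ _ hne
            · intro i _
              have := hrpos i; positivity
            · intro i _
              have := hrpos i
              have e1 : k * ((k + 1) * P + r i) = k * (k + 1) * P + k * r i := by ring
              have e2 : (k + 1) * (k * P + r i) = k * (k + 1) * P + (k + 1) * r i := by
                ring
              have e3 : k * r i < (k + 1) * r i := by
                have : k * r i + r i = (k + 1) * r i := by ring
                omega
              omega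
        _ = (k + 1) ^ h * ∏ i, (k * P + r i) := by
            rw [Finset.prod_mul_distrib, Finset.prod_const, hcard]
    -- (k+1)^h ≤ 2 * k^h
    have hh0 : (0 : ℝ) < (h : ℝ) := by positivity
    have h2 : (1 : ℝ) < (2 : ℝ) ^ ((1 : ℝ) / h) := by
      exact (Real.one_lt_rpow_iff_of_pos (by norm_num)).mpr (Or.inl ⟨by norm_num, by positivity⟩)
    have ha : (0 : ℝ) < (2 : ℝ) ^ ((1 : ℝ) / h) - 1 := by linarith
    have hkR : (1 : ℝ) / ((2 : ℝ) ^ ((1 : ℝ) / h) - 1) < (k : ℝ) := by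
      have hfl := Nat.lt_floor_add_one ((1 : ℝ) / ((2 : ℝ) ^ ((1 : ℝ) / h) - 1))
      have : (k₀ : ℝ) ≤ (k : ℝ) := by exact_mod_cast hk
      have hk0R : (k₀ : ℝ) = (⌊1 / ((2 : ℝ) ^ ((1 : ℝ) / h) - 1)⌋₊ : ℝ) + 1 := by
        rw [hk₀]; push_cast; ring
      linarith
    have hkpos : (0 : ℝ) < (k : ℝ) := by exact_mod_cast hk1
    have hmul : 1 < ((2 : ℝ) ^ ((1 : ℝ) / h) - 1) * k := by
      have := (div_lt_iff₀ ha).mp hkR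
      linarith [this]
    have hstep : (k : ℝ) + 1 < (2 : ℝ) ^ ((1 : ℝ) / h) * k := by nlinarith
    have hpow2 : ((2 : ℝ) ^ ((1 : ℝ) / h)) ^ h = 2 := by
      rw [← Real.rpow_natCast ((2 : ℝ) ^ ((1 : ℝ) / h)) h,
        ← Real.rpow_mul (by norm_num)]
      rw [show (1 : ℝ) / h * h = 1 by field_simp]
      simp
    have hpowR : ((k : ℝ) + 1) ^ h < 2 * (k : ℝ) ^ h := by
      calc ((k : ℝ) + 1) ^ h < ((2 : ℝ) ^ ((1 : ℝ) / h) * k) ^ h := by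
            apply pow_lt_pow_left₀ hstep (by positivity) (by omega)
        _ = 2 * (k : ℝ) ^ h := by rw [mul_pow, hpow2]
    have hpowN : (k + 1) ^ h ≤ 2 * k ^ h := by
      have : (((k + 1) ^ h : ℕ) : ℝ) < ((2 * k ^ h : ℕ) : ℝ) := by push_cast; linarith
      exact_mod_cast le_of_lt this
    have final : k ^ h * S (k + 1) < k ^ h * (2 * S k) := by
      calc k ^ h * S (k + 1) < (k + 1) ^ h * S k := key
        _ ≤ 2 * k ^ h * S k := Nat.mul_le_mul_right _ hpowN
        _ = k ^ h * (2 * S k) := by ring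
    exact Nat.lt_of_mul_lt_mul_left final
end

section
/- Let a₁ > a₂ > ⋯ > a_h be positive integers with gcd(a₁,…,a_h) = 1, such that there exist pairwise coprime positive integers s₁,…,s_h with a_i · s_i = S for all i, where S = ∏_i s_i. If n and L are integers with (h−1)S < n ≤ L, then there exist nonnegative integers v₁,…,v_h with a₁v₁ + ⋯ + a_hv_h = n and v_i ≤ L/a_i for each i. -/
theorem stmt8 (h : ℕ) (hh : 2 ≤ h) (a : Fin h → ℕ)
    (hapos : ∀ i, 0 < a i) (hanti : ∀ i j : Fin h, i < j → a j < a i)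
    (hgcd : Finset.univ.gcd a = 1)
    (s : Fin h → ℕ) (hspos : ∀ i, 0 < s i)
    (hscop : ∀ i j, i ≠ j → Nat.Coprime (s i) (s j))
    (S : ℕ) (hS : S = ∏ i, s i) (haS : ∀ i, a i * s i = S) :
    ∀ n L : ℕ, (h - 1) * S < n → n ≤ L →
      ∃ v : Fin h → ℕ, (∑ i, a i * v i = n) ∧ ∀ i, v i ≤ L / a i := by
  intro n L hn hnL
  have hSpos : 0 < S := by
    rw [hS]; exact Finset.prod_pos (fun i _ => hspos i)
  -- a j = product of s over erase j
  have haprod : ∀ j, a j = ∏ k ∈ Finset.univ.erase j, s k := by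
    intro j
    have h1 : a j * s j = (∏ k ∈ Finset.univ.erase j, s k) * s j := by
      rw [haS, hS, Finset.prod_erase_mul _ _ (Finset.mem_univ j)]
    exact Nat.eq_of_mul_eq_mul_right (hspos j) h1
  have hcop : ∀ j, Nat.Coprime (a j) (s j) := by
    intro j
    rw [haprod j]
    exact Nat.Coprime.prod_left (fun i hi => hscop i j (Finset.ne_of_mem_erase hi))
  have hdvd_a : ∀ i j : Fin h, i ≠ j → s j ∣ a i := by
    intro i j hij
    rw [haprod i]
    exact Finset.dvd_prod_of_mem _ (by simp [Finset.mem_erase, hij, Ne.symm])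
  -- choose residues
  have hx : ∀ i : Fin h, ∃ x : ℕ, x < s i ∧ (s i : ℤ) ∣ ((a i : ℤ) * x - n) := by
    intro i
    haveI : NeZero (s i) := ⟨(hspos i).ne'⟩
    refine ⟨((n : ZMod (s i)) * (a i : ZMod (s i))⁻¹).val, ZMod.val_lt _, ?_⟩
    have : (((a i : ℤ) * ((n : ZMod (s i)) * (a i : ZMod (s i))⁻¹).val - n : ℤ) : ZMod (s i)) = 0 := by
      push_cast
      rw [ZMod.natCast_val, ZMod.cast_id]
      have h1 : (a i : ZMod (s i)) * ((n : ZMod (s i)) * (a i : ZMod (s i))⁻¹) =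
          (n : ZMod (s i)) * ((a i : ZMod (s i)) * (a i : ZMod (s i))⁻¹) := by ring
      rw [h1, ZMod.coe_mul_inv_eq_one _ (hcop i), mul_one, sub_self]
    exact (ZMod.intCast_zmod_eq_zero_iff_dvd _ _).mp this
  choose x hxlt hxdvd using hx
  set T : ℕ := ∑ i, a i * x i with hT
  -- S divides n - T over ℤ
  have hSd : (S : ℤ) ∣ ((n : ℤ) - T) := by
    have hjd : ∀ j : Fin h, (s j : ℤ) ∣ ((n : ℤ) - T) := by
      intro j
      rw [dvd_sub_comm]
      have hTsplit : (T : ℤ) = (a j : ℤ) * x j + ∑ i ∈ Finset.univ.erase j, (a i : ℤ) * x i := by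
        rw [hT]
        push_cast
        rw [← Finset.add_sum_erase _ _ (Finset.mem_univ j)]
      rw [hTsplit]
      have h1 : (s j : ℤ) ∣ ∑ i ∈ Finset.univ.erase j, (a i : ℤ) * x i := by
        refine Finset.dvd_sum (fun i hi => ?_)
        exact Dvd.dvd.mul_right (Int.natCast_dvd_natCast.mpr
          (hdvd_a i j (Finset.ne_of_mem_erase hi))) _
      have h2 : (s j : ℤ) ∣ ((a j : ℤ) * x j - n) := hxdvd j
      have : (a j : ℤ) * x j + (∑ i ∈ Finset.univ.erase j, (a i : ℤ) * x i) - n =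
          (∑ i ∈ Finset.univ.erase j, (a i : ℤ) * x i) + ((a j : ℤ) * x j - n) := by ring
      rw [this]
      exact dvd_add h1 h2
    have hpair : ((Finset.univ : Finset (Fin h)) : Set (Fin h)).Pairwise
        (Function.onFun IsCoprime fun i => (s i : ℤ)) := by
      intro i _ j _ hij
      exact Nat.isCoprime_iff_coprime.mpr (hscop i j hij)
    have := Finset.prod_dvd_of_coprime hpair (fun j _ => hjd j)
    rwa [hS, Nat.cast_prod]
  -- T < h * S
  have hTlt : T < h * S := by
    have huniv : (Finset.univ : Finset (Fin h)).Nonempty := by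
      refine ⟨⟨0, by omega⟩, Finset.mem_univ _⟩
    calc T < ∑ _i : Fin h, S := by
              refine Finset.sum_lt_sum_of_nonempty huniv (fun i _ => ?_)
              calc a i * x i < a i * s i := by
                    exact mul_lt_mul_of_pos_left (hxlt i) (hapos i)
                _ = S := haS i
      _ = h * S := by simp [Finset.sum_const, mul_comm]
  -- T ≤ n
  have hTn : T ≤ n := by
    by_contra hc
    push_neg at hc
    have h1 : (S : ℤ) ∣ ((T : ℤ) - n) := (dvd_sub_comm).mp hSd
    have h2 : (0 : ℤ) < (T : ℤ) - n := by
      have := hc; omega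
    have h3 : (S : ℤ) ≤ (T : ℤ) - n := Int.le_of_dvd h2 h1
    have h4 : (h - 1) * S + S = h * S := by
      have he : h - 1 + 1 = h := by omega
      calc (h - 1) * S + S = (h - 1 + 1) * S := by ring
        _ = h * S := by rw [he]
    -- n > (h-1)*S, T < h*S ⟹ T - n < S
    have h5 : (T : ℤ) < (h : ℤ) * S := by exact_mod_cast hTlt
    have h6 : ((h - 1) * S : ℕ) < (n : ℤ) := by exact_mod_cast hn
    have h7 : ((h - 1) * S : ℕ) + (S : ℤ) = (h : ℤ) * S := by exact_mod_cast h4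
    omega
  have hSdn : S ∣ n - T := by
    have : (S : ℤ) ∣ ((n - T : ℕ) : ℤ) := by
      rwa [Nat.cast_sub hTn]
    exact_mod_cast this
  set i0 : Fin h := ⟨0, by omega⟩ with hi0
  set k : ℕ := (n - T) / S with hk
  set v : Fin h → ℕ := fun i => x i + (if i = i0 then k * s i0 else 0) with hv
  have hsum : ∑ i, a i * v i = n := by
    have hsum1 : ∑ i, a i * v i = T + a i0 * (k * s i0) := by
      rw [hT, hv]
      simp only [mul_add, Finset.sum_add_distrib, mul_ite, mul_zero]
      rw [Finset.sum_ite_eq' Finset.univ i0 (fun i => a i * (k * s i0))]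
      simp
    rw [hsum1]
    have : a i0 * (k * s i0) = k * S := by
      rw [← haS i0]; ring
    rw [this, hk, Nat.div_mul_cancel hSdn]
    omega
  refine ⟨v, hsum, ?_⟩
  intro i
  rw [Nat.le_div_iff_mul_le (hapos i)]
  have h1 : a i * v i ≤ ∑ j, a j * v j :=
    Finset.single_le_sum (f := fun j => a j * v j) (fun j _ => Nat.zero_le _) (Finset.mem_univ i)
  rw [hsum] at h1
  calc v i * a i = a i * v i := mul_comm _ _
    _ ≤ n := h1
    _ ≤ L := hnL
end

section
/- Let s₁, …, s_h be pairwise relatively prime positive integers (h ≥ 2), S = ∏ s_i, and a_i = S/s_i. Then every integer n > (h−1)S can be written as n = a₁v₁ + ⋯ + a_hv_h with nonnegative integers v₁, …, v_h and with v_h ≥ 1. -/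
lemma aux_prod_dvd {ι : Type*} [DecidableEq ι] (t : Finset ι) (f : ι → ℕ) (m : ℕ)
    (hcop : ∀ i ∈ t, ∀ j ∈ t, i ≠ j → Nat.Coprime (f i) (f j))
    (hdvd : ∀ i ∈ t, f i ∣ m) : (∏ i ∈ t, f i) ∣ m := by
  induction t using Finset.induction_on with
  | empty => simp
  | @insert x u hx ih =>
    rw [Finset.prod_insert hx]
    refine Nat.Coprime.mul_dvd_of_dvd_of_dvd ?_ (hdvd x (by simp)) ?_
    · exact Nat.Coprime.prod_right fun j hj =>
        hcop x (by simp) j (by simp [hj]) (by rintro rfl; exact hx hj)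
    · exact ih (fun i hi j hj hij => hcop i (by simp [hi]) j (by simp [hj]) hij)
        (fun i hi => hdvd i (by simp [hi]))

theorem stmt9 (h : ℕ) (hh : 2 ≤ h) (s : Fin h → ℕ)
    (hspos : ∀ i, 0 < s i)
    (hscop : ∀ i j, i ≠ j → Nat.Coprime (s i) (s j))
    (S : ℕ) (hS : S = ∏ i, s i)
    (a : Fin h → ℕ) (ha : ∀ i, a i = S / s i) :
    ∀ n : ℕ, (h - 1) * S < n →
      ∃ v : Fin h → ℕ, (∑ i, a i * v i = n) ∧ 1 ≤ v ⟨h - 1, by omega⟩ := by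
  intro n hn
  have hSdvd : ∀ i, s i ∣ S := fun i => hS ▸ Finset.dvd_prod_of_mem s (Finset.mem_univ i)
  have haprod : ∀ i, a i = ∏ j ∈ Finset.univ.erase i, s j := by
    intro i
    have := Finset.mul_prod_erase Finset.univ s (Finset.mem_univ i)
    rw [ha i, hS, ← this, Nat.mul_div_cancel_left _ (hspos i)]
  have haS : ∀ i, a i * s i = S := fun i => by
    rw [ha i]; exact Nat.div_mul_cancel (hSdvd i)
  have hapos : ∀ i, 0 < a i := by
    intro i
    rw [haprod i]
    exact Finset.prod_pos fun j _ => hspos j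
  have hdvda : ∀ i j, i ≠ j → s i ∣ a j := by
    intro i j hij
    rw [haprod j]
    exact Finset.dvd_prod_of_mem s (Finset.mem_erase.mpr ⟨hij, Finset.mem_univ i⟩)
  have hcopa : ∀ i, Nat.Coprime (a i) (s i) := by
    intro i
    rw [haprod i]
    exact Nat.Coprime.prod_left fun j hj =>
      hscop j i (Finset.mem_erase.mp hj).1
  set L : Fin h := ⟨h - 1, by omega⟩ with hL
  -- CRT-style choice for i ≠ L
  have key : ∀ i, ∃ w : ℕ, w < s i ∧ (a i * w) % s i = n % s i := by
    intro i
    haveI : NeZero (s i) := ⟨(hspos i).ne'⟩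
    refine ⟨((n : ZMod (s i)) * (↑(a i))⁻¹).val, ZMod.val_lt _, ?_⟩
    have : ((a i * (((n : ZMod (s i)) * (↑(a i))⁻¹).val) : ℕ) : ZMod (s i))
        = (n : ZMod (s i)) := by
      push_cast
      rw [ZMod.natCast_val, ZMod.cast_id]
      rw [mul_comm ((n : ZMod (s i))) _, ← mul_assoc,
        ZMod.coe_mul_inv_eq_one _ (hcopa i), one_mul]
    exact (ZMod.natCast_eq_natCast_iff _ _ _).mp this
  choose w hwlt hwmod using key
  set T : ℕ := ∑ i ∈ Finset.univ.erase L, a i * w i with hT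
  have hTbound : T ≤ (h - 1) * S := by
    have h1 : ∀ i, a i * w i ≤ S := by
      intro i
      calc a i * w i ≤ a i * s i := Nat.mul_le_mul_left _ (hwlt i).le
        _ = S := haS i
    calc T ≤ ∑ i ∈ Finset.univ.erase L, S := Finset.sum_le_sum fun i _ => h1 i
      _ = (h - 1) * S := by
          rw [Finset.sum_const, Finset.card_erase_of_mem (Finset.mem_univ L),
            Finset.card_univ, Fintype.card_fin, smul_eq_mul]
  have hTn : T < n := lt_of_le_of_lt hTbound hn
  set m : ℕ := n - T with hm
  have hmpos : 0 < m := by omega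
  -- each s j for j ≠ L divides m
  have hsdvdm : ∀ j, j ≠ L → s j ∣ m := by
    intro j hj
    have h1 : (m : ℤ) = (n : ℤ) - (T : ℤ) := by omega
    have hterm : (s j : ℤ) ∣ (n : ℤ) - ((a j * w j : ℕ) : ℤ) := Nat.ModEq.dvd (hwmod j)
    have hjmem : j ∈ Finset.univ.erase L := Finset.mem_erase.mpr ⟨hj, Finset.mem_univ j⟩
    have hsplit : T = a j * w j + ∑ i ∈ (Finset.univ.erase L).erase j, a i * w i := by
      rw [hT, ← Finset.add_sum_erase _ _ hjmem]
    have hdvdsum : (s j : ℤ) ∣ ((∑ i ∈ (Finset.univ.erase L).erase j, a i * w i : ℕ) : ℤ) := by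
      have : s j ∣ ∑ i ∈ (Finset.univ.erase L).erase j, a i * w i := by
        apply Finset.dvd_sum
        intro i hi
        exact Dvd.dvd.mul_right (hdvda j i (Ne.symm (Finset.mem_erase.mp hi).1)) _
      exact_mod_cast this
    have hrest : (s j : ℤ) ∣ (T : ℤ) - ((a j * w j : ℕ) : ℤ) := by
      have heq : (T : ℤ) - ((a j * w j : ℕ) : ℤ)
          = ((∑ i ∈ (Finset.univ.erase L).erase j, a i * w i : ℕ) : ℤ) := by
        rw [hsplit]; push_cast; ring
      rw [heq]; exact hdvdsum
    have h2 : (s j : ℤ) ∣ (n : ℤ) - (T : ℤ) := by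
      have heq : (n : ℤ) - (T : ℤ)
          = ((n : ℤ) - ((a j * w j : ℕ) : ℤ)) - ((T : ℤ) - ((a j * w j : ℕ) : ℤ)) := by ring
      rw [heq]; exact dvd_sub hterm hrest
    have h3 : (s j : ℤ) ∣ (m : ℤ) := h1 ▸ h2
    exact_mod_cast h3
  have hadvdm : a L ∣ m := by
    rw [haprod L]
    apply aux_prod_dvd
    · intro i _ j _ hij
      exact hscop i j hij
    · intro i hi
      exact hsdvdm i (Finset.mem_erase.mp hi).1
  refine ⟨fun i => if i = L then m / a L else w i, ?_, ?_⟩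
  · have h1 : a L * (m / a L) = m := Nat.mul_div_cancel' hadvdm
    have h2 : ∑ i ∈ Finset.univ.erase L, a i * (if i = L then m / a L else w i) = T := by
      apply Finset.sum_congr rfl
      intro i hi
      rw [if_neg (Finset.mem_erase.mp hi).1]
    rw [← Finset.add_sum_erase _ _ (Finset.mem_univ L)]
    simp only [if_pos rfl, if_true]
    rw [h2, h1]
    omega
  · simp only [if_pos rfl]
    exact Nat.one_le_div_iff (hapos L) |>.mpr (Nat.le_of_dvd hmpos hadvdm)
end

section
/- Let h ≥ 2 and for i = 1, …, h let K_i = {k ∈ ℕ₀ : k ≡ i−1 (mod h)} and let A_i be the set of nonnegative integers whose binary representation has nonzero digits only at positions in K_i. Then A = A₁ ∪ ⋯ ∪ A_h is a basis of order h: every nonnegative integer is a sum of exactly h elements of A. -/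
theorem stmt12 (h : ℕ) (hh : 2 ≤ h)
    (A : Fin h → Set ℕ)
    (hA : ∀ i : Fin h,
      A i = {n : ℕ | ∀ k : ℕ, (Nat.digits 2 n).getD k 0 ≠ 0 → k % h = (i : ℕ)}) :
    ∀ n : ℕ, ∃ f : Fin h → ℕ, (∀ j, f j ∈ ⋃ i, A i) ∧ ∑ j, f j = n := by
  haveI : NeZero h := ⟨by omega⟩
  intro n
  suffices H : ∃ f : Fin h → ℕ,
      (∀ j, ∀ k : ℕ, (Nat.digits 2 (f j)).getD k 0 ≠ 0 → k % h = (j : ℕ)) ∧ ∑ j, f j = n by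
    obtain ⟨f, hf, hsum⟩ := H
    exact ⟨f, fun j => Set.mem_iUnion.2 ⟨j, by rw [hA j]; exact hf j⟩, hsum⟩
  induction n using Nat.strong_induction_on with
  | _ n ih =>
    rcases Nat.eq_zero_or_pos n with rfl | hn
    · exact ⟨fun _ => 0, fun j k hk => by simp at hk, by simp⟩
    · have hq : n / 2 < n := Nat.div_lt_self hn one_lt_two
      obtain ⟨f, hf, hsum⟩ := ih (n / 2) hq
      refine ⟨fun j => 2 * f (j - 1) + (if j = 0 then n % 2 else 0), ?_, ?_⟩
      · intro j k hk
        simp only at hk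
        set c : ℕ := if j = 0 then n % 2 else 0 with hc
        have hc2 : c < 2 := by rw [hc]; split <;> omega
        set m := 2 * f (j - 1) + c with hm
        rcases Nat.eq_zero_or_pos m with h0 | h0
        · rw [h0] at hk; simp at hk
        have hdig : Nat.digits 2 m = m % 2 :: Nat.digits 2 (m / 2) :=
          Nat.digits_def' (by norm_num) h0
        have hmod : m % 2 = c := by omega
        have hdiv : m / 2 = f (j - 1) := by omega
        rw [hdig] at hk
        match k with
        | 0 =>
          simp only [List.getD_cons_zero, hmod] at hk
          have hj : j = 0 := by
            by_contra hne
            rw [hc, if_neg hne] at hk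
            exact hk rfl
          rw [hj]
          simp
        | k + 1 =>
          simp only [List.getD_cons_succ, hdiv] at hk
          have hk' : k % h = ((j - 1 : Fin h) : ℕ) := hf (j - 1) k hk
          have h1 : ((1 : Fin h) : ℕ) = 1 := by
            rw [Fin.val_one']; exact Nat.mod_eq_of_lt hh
          have hj : ((j : ℕ)) = (((j - 1 : Fin h) : ℕ) + 1) % h := by
            conv_lhs => rw [← sub_add_cancel j 1]
            rw [Fin.val_add, h1]
          rw [hj, ← hk', Nat.add_mod, Nat.mod_eq_of_lt (show 1 < h by omega)]
      · have hre : ∑ j : Fin h, f (j - 1) = ∑ j : Fin h, f j :=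
          Fintype.sum_equiv (Equiv.subRight (1 : Fin h)) _ _ (fun x => rfl)
        have hif : ∑ j : Fin h, (if j = 0 then n % 2 else 0) = n % 2 := by
          rw [Finset.sum_ite_eq' Finset.univ (0 : Fin h) (fun _ => n % 2)]
          simp
        simp only [Finset.sum_add_distrib, ← Finset.mul_sum, hre, hif]
        omega
end

section
/- Let h ≥ 2 and let A_i (i = 1,…,h) be as in the Raikov–Stöhr construction with g = 2 and K_i = {k : k ≡ i−1 (mod h)}. Then the counting function of A = ∪_i A_i satisfies A(x) = O(x^{1/h}); in particular limsup_{x→∞} A(x)/x^{1/h} < ∞, so A is a thin basis of order h. -/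
lemma getD_digits_two (n k : ℕ) : (Nat.digits 2 n).getD k 0 = (n.testBit k).toNat := by
  rw [Nat.digits_two_eq_bits, Nat.testBit_eq_inth]
  induction n.bits generalizing k with
  | nil => simp [List.getI]
  | cons b l ih =>
    cases k with
    | zero => cases b <;> simp [List.getI]
    | succ k => simpa [List.getI] using ih k

lemma mem_bitIndices_iff {n k : ℕ} : k ∈ n.bitIndices ↔ n.testBit k = true := by
  induction n using Nat.binaryRec generalizing k with
  | zero => simp
  | bit b n ih =>
    cases b with
    | false =>
      rw [Nat.bitIndices_bit_false]
      cases k with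
      | zero => simp [Nat.testBit_bit_zero]
      | succ k =>
        have := Nat.testBit_bit_succ k false n
        simp only [Nat.bit_false] at this
        simp [this, ih]
    | true =>
      rw [Nat.bitIndices_bit_true]
      cases k with
      | zero =>
        have := Nat.testBit_bit_zero true n
        simp only [Nat.bit_true] at this
        simp [this]
      | succ k =>
        have := Nat.testBit_bit_succ k true n
        simp only [Nat.bit_true] at this
        simp [this, ih]

lemma testBit_sum_two_pow (T : Finset ℕ) (k : ℕ) :
    (∑ i ∈ T, 2 ^ i).testBit k = decide (k ∈ T) := by
  have hsum : ((T.sort (· ≤ ·)).map (fun i => 2 ^ i)).sum = ∑ i ∈ T, 2 ^ i := by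
    rw [Finset.sum, ← Finset.sort_eq (s := T) (r := (· ≤ ·)), Multiset.map_coe, Multiset.sum_coe]
  have hb : (∑ i ∈ T, 2 ^ i).bitIndices = T.sort (· ≤ ·) := by
    rw [← hsum, Nat.bitIndices_twoPowsum (Finset.sortedLT_sort T)]
  have h2 : (∑ i ∈ T, 2 ^ i).testBit k = true ↔ k ∈ T := by
    rw [← mem_bitIndices_iff, hb, Finset.mem_sort]
  simp [← h2]

theorem stmt13 (h : ℕ) (hh : 2 ≤ h)
    (A : Fin h → Set ℕ)
    (hA : ∀ i : Fin h,
      A i = {n : ℕ | ∀ k : ℕ, (Nat.digits 2 n).getD k 0 ≠ 0 → k % h = (i : ℕ)}) :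
    (∃ c : ℝ, 0 < c ∧ ∀ x : ℝ, 1 ≤ x →
        (Nat.card {a : ℕ | a ∈ ⋃ i, A i ∧ 1 ≤ a ∧ (a : ℝ) ≤ x} : ℝ) ≤
          c * x ^ ((1 : ℝ) / h)) ∧
      (∀ n : ℕ, ∃ f : Fin h → ℕ, (∀ j, f j ∈ ⋃ i, A i) ∧ ∑ j, f j = n) := by
  have hh0 : 0 < h := by omega
  -- membership criterion
  have hmem : ∀ (i : Fin h) (a : ℕ), a ∈ A i ↔ ∀ k : ℕ, a.testBit k = true → k % h = (i : ℕ) := by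
    intro i a
    rw [hA i]
    simp only [Set.mem_setOf_eq, getD_digits_two]
    constructor
    · intro H k hk
      exact H k (by simp [hk])
    · intro H k hk
      refine H k ?_
      cases hb : a.testBit k <;> simp [hb] at hk ⊢
  constructor
  · -- counting bound
    refine ⟨2 * h, by positivity, fun x hx => ?_⟩
    set n := ⌊x⌋₊ with hn
    have hn1 : 1 ≤ n := Nat.le_floor (by exact_mod_cast hx)
    set L := Nat.log 2 n with hL
    set m := L / h + 1 with hm
    set S : Set ℕ := {a : ℕ | a ∈ ⋃ i, A i ∧ 1 ≤ a ∧ (a : ℝ) ≤ x} with hS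
    -- every a in S has bits only below L+1
    have hbits : ∀ a : ℕ, a ∈ S → ∀ k, a.testBit k = true → k ≤ L := by
      intro a ha k hk
      have hax : (a : ℝ) ≤ x := ha.2.2
      have han : a ≤ n := Nat.le_floor hax
      have : a < 2 ^ (L + 1) := lt_of_le_of_lt han (Nat.lt_pow_succ_log_self one_lt_two n)
      by_contra hkL
      have : a < 2 ^ k := lt_of_lt_of_le this (Nat.pow_le_pow_right (by norm_num) (by omega))
      rw [Nat.testBit_eq_false_of_lt this] at hk
      exact absurd hk (by simp)
    -- the injection
    have key : ∀ a : S, ∃ i : Fin h, (a : ℕ) ∈ A i := by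
      intro a
      obtain ⟨ha1, -, -⟩ := a.2
      simpa using ha1
    set F : S → Fin h × (Fin m → Bool) := fun a =>
      ⟨(key a).choose, fun t => (a : ℕ).testBit ((key a).choose + t * h)⟩ with hF
    have hinj : Function.Injective F := by
      intro a b hab
      have h1 : (key a).choose = (key b).choose := congrArg Prod.fst hab
      have h2 := congrArg Prod.snd hab
      have hai : (a : ℕ) ∈ A (key a).choose := (key a).choose_spec
      have hbi : (b : ℕ) ∈ A (key a).choose := h1 ▸ (key b).choose_spec
      apply Subtype.ext
      apply Nat.eq_of_testBit_eq
      intro k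
      by_cases hkmod : k % h = (((key a).choose : Fin h) : ℕ)
      · by_cases hkm : k / h < m
        · have hk : k = (((key a).choose : Fin h) : ℕ) + (k / h) * h := by
            have := Nat.div_add_mod k h
            have hmc : k / h * h = h * (k / h) := Nat.mul_comm _ _
            omega
          have h3 := congrFun h2 ⟨k / h, hkm⟩
          simp only [hF] at h3
          rw [← h1] at h3
          rw [hk]
          exact h3
        · -- k too large: both bits false
          have hkL : L < k := by
            by_contra hc
            have := Nat.div_le_div_right (c := h) (le_of_not_gt hc)
            omega
          have hfa : (a : ℕ).testBit k = false := by
            by_contra hfa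
            have := hbits a a.2 k (by simpa using eq_true_of_ne_false hfa)
            omega
          have hfb : (b : ℕ).testBit k = false := by
            by_contra hfb
            have := hbits b b.2 k (by simpa using eq_true_of_ne_false hfb)
            omega
          rw [hfa, hfb]
      · -- wrong residue: both bits false
        have hfa : (a : ℕ).testBit k = false := by
          by_contra hfa
          exact hkmod ((hmem (key a).choose a).mp hai k (eq_true_of_ne_false hfa))
        have hfb : (b : ℕ).testBit k = false := by
          by_contra hfb
          exact hkmod ((hmem (key a).choose b).mp hbi k (eq_true_of_ne_false hfb))
        rw [hfa, hfb]
    have hcard : Nat.card S ≤ h * 2 ^ m := by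
      have := Nat.card_le_card_of_injective F hinj
      simpa [Nat.card_eq_fintype_card] using this
    -- real arithmetic
    have hx0 : (0 : ℝ) < x := lt_of_lt_of_le one_pos hx
    have hpow : ((2 : ℝ) ^ (L / h)) ≤ x ^ ((1 : ℝ) / h) := by
      have h1 : ((2 : ℝ) ^ (L / h)) ^ h ≤ x := by
        rw [← pow_mul]
        calc ((2:ℝ)) ^ (L / h * h) ≤ 2 ^ L := by
              apply pow_le_pow_right₀ (by norm_num)
              exact Nat.div_mul_le_self L h
          _ ≤ n := by exact_mod_cast Nat.pow_log_le_self 2 (by omega)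
          _ ≤ x := Nat.floor_le (le_of_lt hx0)
      have h2 : (x ^ ((1 : ℝ) / h)) ^ h = x := by
        rw [← Real.rpow_natCast (x ^ ((1:ℝ)/h)) h, ← Real.rpow_mul (le_of_lt hx0)]
        rw [one_div, inv_mul_cancel₀ (by exact_mod_cast hh0.ne')]
        exact Real.rpow_one x
      have h3 := pow_le_pow_iff_left₀ (a := (2:ℝ) ^ (L/h)) (b := x ^ ((1:ℝ)/h))
        (by positivity) (by positivity) hh0.ne'
      rw [h2] at h3
      exact h3.mp h1
    calc (Nat.card S : ℝ) ≤ (h : ℝ) * 2 ^ m := by exact_mod_cast hcard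
      _ = (2 * h) * 2 ^ (L / h) := by rw [hm]; ring
      _ ≤ (2 * h) * x ^ ((1:ℝ)/h) := by
          apply mul_le_mul_of_nonneg_left hpow (by positivity)
      _ = 2 * (h : ℝ) * x ^ ((1:ℝ)/h) := by ring
  · -- basis of order h
    intro n
    classical
    set S : Finset ℕ := n.bitIndices.toFinset with hSdef
    have hnsum : ∑ k ∈ S, 2 ^ k = n := by
      rw [hSdef, List.sum_toFinset _ (Nat.bitIndices_sorted.nodup)]
      exact Nat.twoPowSum_bitIndices n
    refine ⟨fun j => ∑ k ∈ S.filter (fun k => k % h = (j : ℕ)), 2 ^ k, ?_, ?_⟩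
    · intro j
      refine Set.mem_iUnion.mpr ⟨j, ?_⟩
      rw [hmem]
      intro k hk
      rw [testBit_sum_two_pow] at hk
      have := of_decide_eq_true hk
      exact (Finset.mem_filter.mp this).2
    · rw [← hnsum]
      rw [← Finset.sum_fiberwise_of_maps_to (g := fun k => (⟨k % h, Nat.mod_lt k hh0⟩ : Fin h))
        (t := Finset.univ) (fun k _ => Finset.mem_univ _) (fun k => 2 ^ k)]
      apply Finset.sum_congr rfl
      intro j _
      apply Finset.sum_congr _ (fun _ _ => rfl)
      ext k
      simp [Fin.ext_iff]
end

section
/- For every h ≥ 2 there exists a thin basis of order h: a set A ⊆ ℕ₀ such that every nonnegative integer is a sum of exactly h elements of A, and there is a constant c > 0 with #{a ∈ A : 1 ≤ a ≤ x} ≤ c·x^{1/h} for all real x ≥ 1. -/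
/-- Spread the binary digits of `m` to positions `r, r+h, r+2h, ...`. -/
def eFun (h r : ℕ) (m : ℕ) : ℕ :=
  if m = 0 then 0 else m % 2 * 2 ^ r + 2 ^ h * eFun h r (m / 2)
  termination_by m
  decreasing_by exact Nat.div_lt_self (by omega) one_lt_two

lemma eFun_zero (h r : ℕ) : eFun h r 0 = 0 := by rw [eFun]; simp

lemma eFun_eq (h r m : ℕ) :
    eFun h r m = m % 2 * 2 ^ r + 2 ^ h * eFun h r (m / 2) := by
  by_cases hm : m = 0
  · subst hm; simp [eFun_zero]
  · rw [eFun]; simp [hm]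

lemma bits_sum : ∀ (k s : ℕ), s < 2 ^ k →
    ∑ r ∈ Finset.range k, (s.testBit r).toNat * 2 ^ r = s := by
  intro k
  induction k with
  | zero => intro s hs; interval_cases s; simp
  | succ k ih =>
    intro s hs
    have hd : s / 2 < 2 ^ k := by
      have : s < 2 ^ k * 2 := by rw [pow_succ] at hs; exact hs
      omega
    have h0 : (s.testBit 0).toNat = s % 2 := by
      rcases Nat.mod_two_eq_zero_or_one s with h | h <;>
        simp [Nat.testBit_zero, h]
    calc ∑ r ∈ Finset.range (k + 1), (s.testBit r).toNat * 2 ^ r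
        = (∑ r ∈ Finset.range k, (s.testBit (r + 1)).toNat * 2 ^ (r + 1))
            + (s.testBit 0).toNat * 2 ^ 0 := Finset.sum_range_succ' _ _
      _ = (∑ r ∈ Finset.range k, ((s / 2).testBit r).toNat * 2 ^ r) * 2 + s % 2 := by
          rw [Finset.sum_mul]
          congr 1
          · refine Finset.sum_congr rfl fun r _ => ?_
            rw [Nat.testBit_add_one, pow_succ]
            ring
          · simpa using h0
      _ = s / 2 * 2 + s % 2 := by rw [ih _ hd]
      _ = s := by omega

lemma repr_lemma (h : ℕ) (hh : 1 ≤ h) : ∀ n : ℕ, ∃ g : Fin h → ℕ,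
    ∑ i : Fin h, eFun h (i : ℕ) (g i) = n := by
  intro n
  induction n using Nat.strong_induction_on with
  | _ n ih =>
    rcases Nat.eq_zero_or_pos n with rfl | hn
    · exact ⟨fun _ => 0, by simp [eFun_zero]⟩
    · have h2 : 2 ≤ 2 ^ h := by
        calc (2 : ℕ) = 2 ^ 1 := rfl
          _ ≤ 2 ^ h := Nat.pow_le_pow_right (by norm_num) hh
      have hq : n / 2 ^ h < n := Nat.div_lt_self hn (by omega)
      obtain ⟨g, hg⟩ := ih _ hq
      refine ⟨fun i => 2 * g i + (((n % 2 ^ h)).testBit i).toNat, ?_⟩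
      have hb : ∀ i : Fin h,
          eFun h (i : ℕ) (2 * g i + ((n % 2 ^ h).testBit i).toNat)
            = ((n % 2 ^ h).testBit i).toNat * 2 ^ (i : ℕ) + 2 ^ h * eFun h (i : ℕ) (g i) := by
        intro i
        have hle : ((n % 2 ^ h).testBit i).toNat ≤ 1 := Bool.toNat_le _
        have e1 : (2 * g i + ((n % 2 ^ h).testBit i).toNat) % 2
            = ((n % 2 ^ h).testBit i).toNat := by omega
        have e2 : (2 * g i + ((n % 2 ^ h).testBit i).toNat) / 2 = g i := by omega
        rw [eFun_eq, e1, e2]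
      rw [Finset.sum_congr rfl fun i _ => hb i, Finset.sum_add_distrib,
        ← Finset.mul_sum, hg]
      have : ∑ i : Fin h, ((n % 2 ^ h).testBit i).toNat * 2 ^ (i : ℕ)
          = n % 2 ^ h := by
        rw [Fin.sum_univ_eq_sum_range (fun r => ((n % 2 ^ h).testBit r).toNat * 2 ^ r)]
        exact bits_sum h (n % 2 ^ h) (Nat.mod_lt _ (by omega))
      rw [this]
      exact Nat.mod_add_div n (2 ^ h)

lemma eFun_lb (h r : ℕ) : ∀ m : ℕ, 1 ≤ m → 2 ^ (h * Nat.log2 m) ≤ eFun h r m := by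
  intro m
  induction m using Nat.strong_induction_on with
  | _ m ih =>
    intro hm
    rcases lt_or_ge m 2 with h2 | h2
    · have hm1 : m = 1 := by omega
      subst hm1
      rw [eFun_eq]
      have : Nat.log2 1 = 0 := by simp [Nat.log2_def]
      rw [this]
      simp [eFun_zero]
      exact Nat.one_le_two_pow
    · have hlog : Nat.log2 m = Nat.log2 (m / 2) + 1 := by
        rw [Nat.log2_def]
        simp [h2]
      have hd1 : 1 ≤ m / 2 := by omega
      have hdlt : m / 2 < m := by omega
      have hih := ih _ hdlt hd1
      rw [eFun_eq, hlog]
      calc 2 ^ (h * (Nat.log2 (m / 2) + 1))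
          = 2 ^ h * 2 ^ (h * Nat.log2 (m / 2)) := by
            rw [Nat.mul_add, Nat.mul_one, pow_add, mul_comm]
        _ ≤ 2 ^ h * eFun h r (m / 2) := Nat.mul_le_mul_left _ hih
        _ ≤ _ := Nat.le_add_left _ _

theorem stmt19 (h : ℕ) (hh : 2 ≤ h) :
    ∃ A : Set ℕ,
      (∀ n : ℕ, ∃ f : Fin h → ℕ, (∀ i, f i ∈ A) ∧ ∑ i, f i = n) ∧
        ∃ c : ℝ, 0 < c ∧ ∀ x : ℝ, 1 ≤ x →
          (Nat.card {a : ℕ | a ∈ A ∧ 1 ≤ a ∧ (a : ℝ) ≤ x} : ℝ) ≤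
            c * x ^ ((1 : ℝ) / h) := by
  refine ⟨{a | ∃ r < h, ∃ m, eFun h r m = a}, ?_, ?_⟩
  · intro n
    obtain ⟨g, hg⟩ := repr_lemma h (by omega) n
    exact ⟨fun i => eFun h (i : ℕ) (g i), fun i => ⟨i, i.isLt, g i, rfl⟩, hg⟩
  · refine ⟨3 * h, by positivity, ?_⟩
    intro x hx
    set y : ℝ := x ^ ((1 : ℝ) / h) with hy
    have hy1 : 1 ≤ y := Real.one_le_rpow hx (by positivity)
    set N : ℕ := ⌊2 * y⌋₊ with hN
    -- the counting set is contained in the range of a function on a finite type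
    have hsub : {a : ℕ | (∃ r < h, ∃ m, eFun h r m = a) ∧ 1 ≤ a ∧ (a : ℝ) ≤ x}
        ⊆ Set.range (fun p : Fin h × Fin (N + 1) => eFun h p.1 p.2) := by
      rintro a ⟨⟨r, hr, m, hm⟩, ha1, hax⟩
      have hm0 : m ≠ 0 := by
        rintro rfl
        rw [eFun_zero] at hm
        omega
      -- bound m
      have hlb : 2 ^ (h * Nat.log2 m) ≤ a := hm ▸ eFun_lb h r m (by omega)
      have hlbR : ((2 : ℝ) ^ Nat.log2 m) ^ (h : ℕ) ≤ x := by
        have : ((2 ^ (h * Nat.log2 m) : ℕ) : ℝ) ≤ x := le_trans (by exact_mod_cast hlb) hax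
        calc ((2 : ℝ) ^ Nat.log2 m) ^ (h : ℕ) = (2 : ℝ) ^ (h * Nat.log2 m) := by
              rw [← pow_mul, mul_comm]
          _ ≤ x := by push_cast at this; exact this
      have hty : (2 : ℝ) ^ Nat.log2 m ≤ y := by
        have h0 : (0 : ℝ) ≤ (2 : ℝ) ^ Nat.log2 m := by positivity
        have := Real.rpow_le_rpow (by positivity) hlbR
          (by positivity : (0:ℝ) ≤ (1 : ℝ) / h)
        have key : (((2 : ℝ) ^ Nat.log2 m) ^ (h : ℕ)) ^ ((1 : ℝ) / h)
            = (2 : ℝ) ^ Nat.log2 m := by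
          rw [← Real.rpow_natCast ((2 : ℝ) ^ Nat.log2 m) h, ← Real.rpow_mul h0,
            mul_one_div, div_self (show (h : ℝ) ≠ 0 by positivity), Real.rpow_one]
        calc (2 : ℝ) ^ Nat.log2 m
            = (((2 : ℝ) ^ Nat.log2 m) ^ (h : ℕ)) ^ ((1 : ℝ) / h) := key.symm
          _ ≤ y := this
      have hmN : m ≤ N := by
        have hm2 : m < 2 * 2 ^ Nat.log2 m := by
          have := @Nat.lt_log2_self m
          rw [pow_succ] at this
          omega
        have : (m : ℝ) ≤ 2 * y := by
          calc (m : ℝ) ≤ 2 * (2 : ℝ) ^ Nat.log2 m := by exact_mod_cast hm2.le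
            _ ≤ 2 * y := by linarith
        exact Nat.le_floor this
      exact ⟨(⟨r, hr⟩, ⟨m, by omega⟩), hm⟩
    have hcard : Nat.card {a : ℕ | (∃ r < h, ∃ m, eFun h r m = a) ∧ 1 ≤ a ∧ (a : ℝ) ≤ x}
        ≤ h * (N + 1) := by
      have h1 := Nat.card_mono (Set.finite_range _) hsub
      have h2 : Nat.card (Set.range (fun p : Fin h × Fin (N + 1) => eFun h p.1 p.2))
          ≤ h * (N + 1) := by
        have := Nat.card_le_card_of_surjective
          (Set.rangeFactorization (fun p : Fin h × Fin (N + 1) => eFun h p.1 p.2))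
          Set.rangeFactorization_surjective
        simpa [Nat.card_eq_fintype_card] using this
      omega
    calc (Nat.card {a : ℕ | (∃ r < h, ∃ m, eFun h r m = a) ∧ 1 ≤ a ∧ (a : ℝ) ≤ x} : ℝ)
        ≤ (h * (N + 1) : ℕ) := by exact_mod_cast hcard
      _ ≤ (h : ℝ) * (2 * y + 1) := by
          push_cast
          have : (N : ℝ) ≤ 2 * y := Nat.floor_le (by linarith)
          have hh0 : (0 : ℝ) ≤ h := by positivity
          nlinarith
      _ ≤ 3 * h * y := by nlinarith [hy1, (by exact_mod_cast hh : (2:ℝ) ≤ h)]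
end
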